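/- Consider three bodies with m_1 = m_2, m_3 = 1 − 2m_1 (all positive), Euler collinear rotating configuration x̄ = (R, −R, 0) (in ℂ), rotating k times with angular speed ω and satisfying the minimality condition R^{α+2} = α/(2β) with β = (k+ω)²/(m_1 2^{−α} + 2 m_3). Then, for the vertical variation with v_1 = v_2 ≠ v_3, the second variation is negative if and only if (k+ω)² > m_1/2^{α+1} + 1 − 2m_1. -/

import Mathlib

/-- For the Euler collinear configuration `x̄ = (R, −R, 0)` with `m₁ = m₂`,
`m₃ = 1 − 2m₁`, satisfying the minimality relation `R^{α+2} = α/(2β)` with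
`β = (k+ω)²/(m₁2^{−α} + 2m₃)`, the vertical second-variation quantity
`2 m₁ m₃ (v₁−v₃)²(1 − α R^{−(α+2)})` is negative iff `(k+ω)² > m₁/2^{α+1} + 1 − 2m₁`. -/
theorem euler_vertical_variation_negativity
    (α m1 ω R v1 v3 : ℝ) (k : ℤ)
    (hα : 0 < α) (hm1 : 0 < m1) (hm1' : m1 < 1/2)
    (hR : 0 < R) (hv : v1 ≠ v3)
    (m3 : ℝ) (hm3 : m3 = 1 - 2 * m1)
    (β : ℝ) (hβ : β = ((k : ℝ) + ω) ^ 2 / (m1 * (2:ℝ) ^ (-α) + 2 * m3))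
    (hmin : R ^ (α + 2) = α / (2 * β)) :
    2 * m1 * m3 * (v1 - v3) ^ 2 * (1 - α * R ^ (-(α + 2))) < 0
      ↔ ((k : ℝ) + ω) ^ 2 > m1 / 2 ^ (α + 1) + 1 - 2 * m1 := by
  have hm3pos : 0 < m3 := by rw [hm3]; linarith
  have hvsq : 0 < (v1 - v3) ^ 2 := pow_two_pos_of_ne_zero (sub_ne_zero.mpr hv)
  have hc : 0 < 2 * m1 * m3 * (v1 - v3) ^ 2 := by positivity
  have hS : 0 < R ^ (α + 2) := Real.rpow_pos_of_pos hR _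
  have hSneg : R ^ (-(α + 2)) = (R ^ (α + 2))⁻¹ := Real.rpow_neg hR.le _
  -- positivity of denominator
  have h2a : (0:ℝ) < (2:ℝ) ^ (-α) := Real.rpow_pos_of_pos two_pos _
  have hD : 0 < m1 * (2:ℝ) ^ (-α) + 2 * m3 := by positivity
  -- β > 0
  have hβpos : 0 < β := by
    by_contra h
    push_neg at h
    have : α / (2 * β) ≤ 0 :=
      div_nonpos_of_nonneg_of_nonpos hα.le (by linarith)
    rw [← hmin] at this
    linarith
  -- reduce to the sign of the last factor
  have step1 : 2 * m1 * m3 * (v1 - v3) ^ 2 * (1 - α * R ^ (-(α + 2))) < 0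
      ↔ 1 - α * R ^ (-(α + 2)) < 0 := by
    constructor
    · intro h
      by_contra h'
      push_neg at h'
      nlinarith
    · exact fun h => mul_neg_of_pos_of_neg hc h
  rw [step1, hSneg]
  have step2 : 1 - α * (R ^ (α + 2))⁻¹ < 0 ↔ R ^ (α + 2) < α := by
    rw [sub_neg, ← div_eq_mul_inv, lt_div_iff₀ hS, one_mul]
  rw [step2, hmin]
  have h2β : 0 < 2 * β := by linarith
  have step3 : α / (2 * β) < α ↔ 1 < 2 * β := by
    rw [div_lt_iff₀ h2β]
    constructor
    · intro h
      nlinarith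
    · intro h
      nlinarith
  rw [step3, hβ]
  have step4 : 1 < 2 * (((k:ℝ) + ω) ^ 2 / (m1 * (2:ℝ) ^ (-α) + 2 * m3))
      ↔ m1 * (2:ℝ) ^ (-α) + 2 * m3 < 2 * ((k:ℝ) + ω) ^ 2 := by
    rw [← mul_div_assoc, lt_div_iff₀ hD, one_mul]
  rw [step4, hm3]
  -- arithmetic with powers of two
  have h2a' : (0:ℝ) < (2:ℝ) ^ (α + 1) := Real.rpow_pos_of_pos two_pos _
  have hpow : m1 * (2:ℝ) ^ (-α) = 2 * (m1 / 2 ^ (α + 1)) := by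
    have h1 : (2:ℝ) ^ (α + 1) = 2 ^ α * 2 := by
      rw [Real.rpow_add two_pos, Real.rpow_one]
    have h2 : (2:ℝ) ^ (-α) = (2 ^ α)⁻¹ := Real.rpow_neg two_pos.le _
    have h3 : (0:ℝ) < (2:ℝ) ^ α := Real.rpow_pos_of_pos two_pos _
    rw [h1, h2]
    field_simp
  constructor
  · intro h
    rw [gt_iff_lt]
    nlinarith [hpow]
  · intro h
    rw [gt_iff_lt] at h
    nlinarith [hpow]
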